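/- (Theorem 1, case i_1 = 1.) Assume no two ghost positions are consecutive, i.e. ι k + 1 < ι (k+1) for all k with k + 1 ≤ m − 1, and assume ι 0 = 1. Then for every v : ℝ and every w : ℕ → ℝ there exists a multivariate polynomial p : MvPolynomial (Fin (n+m)) ℝ with total degree at most 2*m − 1 such that for every choice of input bits b : ℕ → ℤ with b k ∈ {0,1} for all k and every c implementing the m-plus-bits interface for b, one has v + ∑_{i=1}^{n} w i * (φ* i : ℝ) = MvPolynomial.eval (fun t : Fin (n+m) => ((φ (t + 1)) : ℝ)) p. -/
import Mathlib


/-- `c` implements the `m`-plus-bits challenge interface for input bits `b`,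
with ghost-bit positions `ι 0 < ι 1 < ... < ι (m-1)`, for an `n`-stage PUF. -/
def MPlusBitsInterface (n m : ℕ) (hm : 1 ≤ m) (ι : Fin m → ℕ)
    (b c : ℕ → ℤ) : Prop :=
  (∀ i, 1 ≤ i → i < ι ⟨0, hm⟩ → c i = b i) ∧
  (∀ k (hk : k + 1 ≤ m - 1), ∀ i,
    ι ⟨k, by omega⟩ < i → i < ι ⟨k + 1, by omega⟩ → c (i - (k + 1)) = b i) ∧
  (∀ i, ι ⟨m - 1, by omega⟩ < i → i ≤ n + m → c (i - m) = b i)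

namespace Stmt7Aux

variable {m : ℕ} (ι : Fin m → ℕ)

def gset (i : ℕ) : Finset (Fin m) := Finset.univ.filter (fun k : Fin m => ι k ≤ i + k)

def gcount (i : ℕ) : ℕ := (gset ι i).card

def sig (i : ℕ) : ℕ := i + gcount ι i

lemma iota_gap (hmono : StrictMono ι) :
    ∀ d (a b : Fin m), (a:ℕ) + d = (b:ℕ) → ι a + d ≤ ι b := by
  intro d
  induction d with
  | zero =>
    intro a b h
    have : a = b := Fin.ext (by omega)
    subst this; omega
  | succ d ih =>
    intro a b h
    have hb1 : (b:ℕ) - 1 < m := by omega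
    have h1 := ih a ⟨(b:ℕ)-1, hb1⟩ (by simp; omega)
    have h2 : ι ⟨(b:ℕ)-1, hb1⟩ < ι b := hmono (by simp [Fin.lt_def]; omega)
    omega

lemma gcount_spec (hmono : StrictMono ι) (i : ℕ) (k : Fin m) :
    ι k ≤ i + (k:ℕ) ↔ (k : ℕ) < gcount ι i := by
  constructor
  · intro hk
    have hsub : Finset.Iic k ⊆ gset ι i := by
      intro k' hk'
      simp only [Finset.mem_Iic, Fin.le_def] at hk'
      have := iota_gap ι hmono ((k:ℕ) - (k':ℕ)) k' k (by omega)
      simp only [gset, Finset.mem_filter, Finset.mem_univ, true_and]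
      omega
    have h1 := Finset.card_le_card hsub
    have h2 : (Finset.Iic k).card = (k:ℕ) + 1 := by
      rw [Fin.card_Iic]
    unfold gcount
    omega
  · intro hk
    by_contra hcon
    have hsub : gset ι i ⊆ Finset.Iio k := by
      intro k' hk'
      simp only [gset, Finset.mem_filter, Finset.mem_univ, true_and] at hk'
      simp only [Finset.mem_Iio, Fin.lt_def]
      by_contra hge
      have := iota_gap ι hmono ((k':ℕ) - (k:ℕ)) k k' (by omega)
      omega
    have h1 := Finset.card_le_card hsub
    have h2 : (Finset.Iio k).card = (k:ℕ) := by rw [Fin.card_Iio]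
    unfold gcount at hk
    omega

lemma gcount_le (i : ℕ) : gcount ι i ≤ m := by
  have := Finset.card_le_card (Finset.filter_subset (fun k : Fin m => ι k ≤ i + k) Finset.univ)
  simpa [gcount, gset] using this

lemma gcount_mono : Monotone (gcount ι) := by
  intro i j hij
  apply Finset.card_le_card
  intro k hk
  simp only [gset, Finset.mem_filter, Finset.mem_univ, true_and] at hk ⊢
  omega

lemma sig_strictMono : StrictMono (sig ι) := by
  apply strictMono_nat_of_lt_succ
  intro i
  have := gcount_mono ι (Nat.le_succ i)
  simp only [Nat.succ_eq_add_one] at this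
  unfold sig; omega

section Main

variable {n : ℕ} (hm : 1 ≤ m) (hmono : StrictMono ι)
  (hfirst1 : ι ⟨0, hm⟩ = 1)

include hmono hfirst1 in
lemma gcount_pos (i : ℕ) (h1 : 1 ≤ i) : 1 ≤ gcount ι i := by
  have := (gcount_spec ι hmono i ⟨0, hm⟩).1 (by simp [hfirst1]; omega)
  omega

include hmono in
lemma iota_lt_sig (i : ℕ) (k : Fin m) (hk : (k:ℕ) < gcount ι i) : ι k < sig ι i := by
  have := (gcount_spec ι hmono i k).2 hk
  unfold sig; omega

include hmono in
lemma sig_lt_iota (i : ℕ) (k : Fin m) (hk : gcount ι i ≤ (k:ℕ)) : sig ι i < ι k := by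
  have h := (gcount_spec ι hmono i k)
  unfold sig; omega

include hmono hfirst1 in
lemma sig_nonghost (i : ℕ) (h1 : 1 ≤ i) (k : Fin m) : ι k ≠ sig ι i := by
  rcases lt_or_ge (k:ℕ) (gcount ι i) with h | h
  · exact Nat.ne_of_lt (iota_lt_sig ι hmono i k h)
  · exact (Nat.ne_of_lt (sig_lt_iota ι hmono i k h)).symm

include hmono hfirst1 in
lemma c_eq_b_sig (hlast : ι ⟨m - 1, by omega⟩ ≤ n + m)
    (b c : ℕ → ℤ) (hI : MPlusBitsInterface n m hm ι b c)
    (i : ℕ) (h1 : 1 ≤ i) (h2 : i ≤ n) : c i = b (sig ι i) := by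
  obtain ⟨hI1, hI2, hI3⟩ := hI
  have hg1 : 1 ≤ gcount ι i := gcount_pos ι hm hmono hfirst1 i h1
  have hgm : gcount ι i ≤ m := gcount_le ι i
  set g := gcount ι i with hg
  rcases eq_or_lt_of_le hgm with hgeq | hglt
  · -- g = m, use third clause
    have hlt : ι ⟨m - 1, by omega⟩ < sig ι i :=
      iota_lt_sig ι hmono i ⟨m-1, by omega⟩ (by simp; omega)
    have hle : sig ι i ≤ n + m := by unfold sig; omega
    have := hI3 (sig ι i) hlt hle
    have hsi : sig ι i - m = i := by unfold sig; omega
    rwa [hsi] at this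
  · -- g < m, use second clause with k = g - 1
    have hk : (g - 1) + 1 ≤ m - 1 := by omega
    have hlt1 : ι ⟨g - 1, by omega⟩ < sig ι i :=
      iota_lt_sig ι hmono i ⟨g-1, by omega⟩ (by simp; omega)
    have hlt2 : sig ι i < ι ⟨(g - 1) + 1, by omega⟩ :=
      sig_lt_iota ι hmono i ⟨(g-1)+1, by omega⟩ (by simp; omega)
    have := hI2 (g-1) hk (sig ι i) hlt1 hlt2
    have hsi : sig ι i - ((g-1)+1) = i := by unfold sig; omega
    rwa [hsi] at this

include hmono in
lemma sig_iff (i : ℕ) (k : Fin m) : sig ι i < ι k ↔ gcount ι i ≤ (k:ℕ) := by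
  constructor
  · intro h
    by_contra hc
    have := iota_lt_sig ι hmono i k (by omega)
    omega
  · exact sig_lt_iota ι hmono i k

include hmono in
lemma cardS (i : ℕ) :
    (Finset.univ.filter (fun k : Fin m => sig ι i < ι k)).card = m - gcount ι i := by
  have h1 : Finset.univ.filter (fun k : Fin m => sig ι i < ι k)
      = Finset.univ.filter (fun k : Fin m => ¬ ((k:ℕ) < gcount ι i)) := by
    apply Finset.filter_congr
    intro k _
    rw [sig_iff ι hmono]
    omega
  have h2 : Finset.univ.filter (fun k : Fin m => ((k:ℕ) < gcount ι i)) = gset ι i := by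
    apply Finset.filter_congr
    intro k _
    exact (gcount_spec ι hmono i k).symm
  have h3 := Finset.card_filter_add_card_filter_not
    (s := (Finset.univ : Finset (Fin m))) (p := fun k : Fin m => (k:ℕ) < gcount ι i)
  have h4 : (gset ι i).card = gcount ι i := rfl
  have h5 : (Finset.univ : Finset (Fin m)).card = m := by simp
  have h6 := gcount_le ι i
  have h7 : (Finset.univ.filter (fun k : Fin m => ((k:ℕ) < gcount ι i))).card = gcount ι i := by
    rw [h2]; rfl
  rw [h1]
  omega

include hmono hfirst1 in
lemma union_eq (hlast : ι ⟨m - 1, by omega⟩ ≤ n + m)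
    (i : ℕ) (h1 : 1 ≤ i) (h2 : i ≤ n) :
    (Finset.Icc i n).image (sig ι) ∪
      (Finset.univ.filter (fun k : Fin m => sig ι i < ι k)).image (fun k => ι k)
      = Finset.Icc (sig ι i) (n + m) := by
  have hdisj : Disjoint ((Finset.Icc i n).image (sig ι))
      ((Finset.univ.filter (fun k : Fin m => sig ι i < ι k)).image (fun k => ι k)) := by
    rw [Finset.disjoint_left]
    rintro x hx hy
    simp only [Finset.mem_image, Finset.mem_Icc, Finset.mem_filter, Finset.mem_univ,
      true_and] at hx hy
    obtain ⟨t, ht, rfl⟩ := hx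
    obtain ⟨k, hk, hkx⟩ := hy
    exact sig_nonghost ι hm hmono hfirst1 (i := t) (by omega) k hkx
  have hsub : (Finset.Icc i n).image (sig ι) ∪
      (Finset.univ.filter (fun k : Fin m => sig ι i < ι k)).image (fun k => ι k)
      ⊆ Finset.Icc (sig ι i) (n + m) := by
    intro x hx
    simp only [Finset.mem_union, Finset.mem_image, Finset.mem_Icc, Finset.mem_filter,
      Finset.mem_univ, true_and] at hx ⊢
    rcases hx with ⟨t, ht, rfl⟩ | ⟨k, hk, rfl⟩
    · constructor
      · exact (sig_strictMono ι).monotone ht.1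
      · have := gcount_le ι t
        unfold sig; omega
    · constructor
      · omega
      · calc ι k ≤ ι ⟨m - 1, by omega⟩ := hmono.monotone (by simp [Fin.le_def]; omega)
          _ ≤ n + m := hlast
  apply Finset.eq_of_subset_of_card_le hsub
  have hcA : ((Finset.Icc i n).image (sig ι)).card = n + 1 - i := by
    rw [Finset.card_image_of_injective _ (sig_strictMono ι).injective, Nat.card_Icc]
  have hcB := cardS ι hmono i
  have hcB' : ((Finset.univ.filter (fun k : Fin m => sig ι i < ι k)).image
      (fun k => ι k)).card = m - gcount ι i := by
    rw [Finset.card_image_of_injective _ hmono.injective, hcB]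
  rw [Finset.card_union_of_disjoint hdisj, hcA, hcB', Nat.card_Icc]
  have := gcount_le ι i
  unfold sig
  omega

include hmono hfirst1 in
lemma prod_c_eq (hlast : ι ⟨m - 1, by omega⟩ ≤ n + m)
    (b c : ℕ → ℤ) (hb : ∀ k, b k = 0 ∨ b k = 1)
    (hI : MPlusBitsInterface n m hm ι b c)
    (i : ℕ) (h1 : 1 ≤ i) (h2 : i ≤ n) :
    (∏ k ∈ Finset.Icc i n, (2 * c k - 1) : ℤ) =
      (∏ k ∈ Finset.Icc (sig ι i) (n + m), (2 * b k - 1)) *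
        ∏ k ∈ Finset.univ.filter (fun k : Fin m => sig ι i < ι k), (2 * b (ι k) - 1) := by
  have hdisj : Disjoint ((Finset.Icc i n).image (sig ι))
      ((Finset.univ.filter (fun k : Fin m => sig ι i < ι k)).image (fun k => ι k)) := by
    rw [Finset.disjoint_left]
    rintro x hx hy
    simp only [Finset.mem_image, Finset.mem_Icc, Finset.mem_filter, Finset.mem_univ,
      true_and] at hx hy
    obtain ⟨t, ht, rfl⟩ := hx
    obtain ⟨k, hk, hkx⟩ := hy
    exact sig_nonghost ι hm hmono hfirst1 (i := t) (by omega) k hkx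
  have hU := union_eq ι hm hmono hfirst1 hlast i h1 h2
  have hsplit : (∏ k ∈ Finset.Icc (sig ι i) (n + m), (2 * b k - 1) : ℤ)
      = (∏ k ∈ (Finset.Icc i n).image (sig ι), (2 * b k - 1)) *
        ∏ k ∈ (Finset.univ.filter (fun k : Fin m => sig ι i < ι k)).image (fun k => ι k),
          (2 * b k - 1) := by
    rw [← hU, Finset.prod_union hdisj]
  have hA : (∏ k ∈ (Finset.Icc i n).image (sig ι), (2 * b k - 1) : ℤ)
      = ∏ t ∈ Finset.Icc i n, (2 * c t - 1) := by
    rw [Finset.prod_image (fun x _ y _ h => (sig_strictMono ι).injective h)]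
    apply Finset.prod_congr rfl
    intro t ht
    simp only [Finset.mem_Icc] at ht
    rw [c_eq_b_sig ι hm hmono hfirst1 hlast b c hI t (by omega) ht.2]
  have hB : (∏ k ∈ (Finset.univ.filter (fun k : Fin m => sig ι i < ι k)).image
      (fun k => ι k), (2 * b k - 1) : ℤ)
      = ∏ k ∈ Finset.univ.filter (fun k : Fin m => sig ι i < ι k), (2 * b (ι k) - 1) := by
    rw [Finset.prod_image (fun x _ y _ h => hmono.injective h)]
  have hsq : (∏ k ∈ Finset.univ.filter (fun k : Fin m => sig ι i < ι k),
      (2 * b (ι k) - 1) : ℤ) *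
      ∏ k ∈ Finset.univ.filter (fun k : Fin m => sig ι i < ι k), (2 * b (ι k) - 1) = 1 := by
    rw [← Finset.prod_mul_distrib]
    apply Finset.prod_eq_one
    intro k _
    rcases hb (ι k) with h | h <;> rw [h] <;> ring
  calc (∏ k ∈ Finset.Icc i n, (2 * c k - 1) : ℤ)
      = (∏ k ∈ Finset.Icc i n, (2 * c k - 1)) *
        ((∏ k ∈ Finset.univ.filter (fun k : Fin m => sig ι i < ι k), (2 * b (ι k) - 1)) *
         ∏ k ∈ Finset.univ.filter (fun k : Fin m => sig ι i < ι k), (2 * b (ι k) - 1)) := by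
          rw [hsq, mul_one]
    _ = ((∏ k ∈ Finset.Icc i n, (2 * c k - 1)) *
        (∏ k ∈ Finset.univ.filter (fun k : Fin m => sig ι i < ι k), (2 * b (ι k) - 1))) *
        ∏ k ∈ Finset.univ.filter (fun k : Fin m => sig ι i < ι k), (2 * b (ι k) - 1) := by
          ring
    _ = (∏ k ∈ Finset.Icc (sig ι i) (n + m), (2 * b k - 1)) *
        ∏ k ∈ Finset.univ.filter (fun k : Fin m => sig ι i < ι k), (2 * b (ι k) - 1) := by
          rw [hsplit, hA, hB]

end Main

noncomputable def Phi (n m : ℕ) (j : ℕ) : MvPolynomial (Fin (n + m)) ℝ :=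
  if h : 1 ≤ j ∧ j ≤ n + m then MvPolynomial.X ⟨j - 1, by omega⟩ else 1

lemma Phi_deg (n m j : ℕ) : (Phi n m j).totalDegree ≤ 1 := by
  unfold Phi
  split
  · exact le_of_eq (MvPolynomial.totalDegree_X _)
  · simp

lemma Phi_eval (n m : ℕ) (b : ℕ → ℤ) (j : ℕ) (h1 : 1 ≤ j) (h2 : j ≤ n + m + 1) :
    MvPolynomial.eval
      (fun t : Fin (n + m) => ((∏ k ∈ Finset.Icc ((t : ℕ) + 1) (n + m), (2 * b k - 1) : ℤ) : ℝ))
      (Phi n m j)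
    = ((∏ k ∈ Finset.Icc j (n + m), (2 * b k - 1) : ℤ) : ℝ) := by
  unfold Phi
  split
  case isTrue h =>
    simp only [MvPolynomial.eval_X]
    have hj : j - 1 + 1 = j := by omega
    rw [hj]
  case isFalse h =>
    have hj : j = n + m + 1 := by omega
    subst hj
    rw [Finset.Icc_eq_empty (by omega)]
    simp

lemma feat_split (b : ℕ → ℤ) (hb : ∀ k, b k = 0 ∨ b k = 1) (j N : ℕ) (h2 : j ≤ N) :
    (2 * b j - 1 : ℤ) =
      (∏ k ∈ Finset.Icc j N, (2 * b k - 1)) * ∏ k ∈ Finset.Icc (j + 1) N, (2 * b k - 1) := by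
  have hins : (∏ k ∈ Finset.Icc j N, (2 * b k - 1) : ℤ)
      = (2 * b j - 1) * ∏ k ∈ Finset.Icc (j + 1) N, (2 * b k - 1) := by
    rw [← Finset.Ico_add_one_right_eq_Icc, Finset.prod_eq_prod_Ico_succ_bot (by omega), Finset.Ico_add_one_right_eq_Icc]
  have hsq : (∏ k ∈ Finset.Icc (j + 1) N, (2 * b k - 1) : ℤ) *
      ∏ k ∈ Finset.Icc (j + 1) N, (2 * b k - 1) = 1 := by
    rw [← Finset.prod_mul_distrib]
    apply Finset.prod_eq_one
    intro k _
    rcases hb k with h | h <;> rw [h] <;> ring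
  calc (2 * b j - 1 : ℤ) = (2 * b j - 1) * ((∏ k ∈ Finset.Icc (j + 1) N, (2 * b k - 1)) *
        ∏ k ∈ Finset.Icc (j + 1) N, (2 * b k - 1)) := by rw [hsq, mul_one]
    _ = ((2 * b j - 1) * (∏ k ∈ Finset.Icc (j + 1) N, (2 * b k - 1))) *
        ∏ k ∈ Finset.Icc (j + 1) N, (2 * b k - 1) := by ring
    _ = (∏ k ∈ Finset.Icc j N, (2 * b k - 1)) *
        ∏ k ∈ Finset.Icc (j + 1) N, (2 * b k - 1) := by rw [hins]

end Stmt7Aux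

open Stmt7Aux

/-- Theorem 1, case i₁ = 1: if no two ghost positions are
consecutive, the argument of the sign function in the APUF response model is,
as a function of the observable feature vector `(φ(1), ..., φ(n+m))`, given by
a multivariate polynomial of total degree at most `2m - 1` (case `i₁ = 1`). -/
theorem stmt7 (n m : ℕ) (hn : 1 ≤ n) (hm : 1 ≤ m)
    (ι : Fin m → ℕ) (hmono : StrictMono ι)
    (hfirst : 1 ≤ ι ⟨0, hm⟩) (hlast : ι ⟨m - 1, by omega⟩ ≤ n + m)
    (hnc : ∀ k (hk : k + 1 ≤ m - 1), ι ⟨k, by omega⟩ + 1 < ι ⟨k + 1, by omega⟩)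
    (hfirst1 : ι ⟨0, hm⟩ = 1) :
    ∀ (v : ℝ) (w : ℕ → ℝ),
      ∃ p : MvPolynomial (Fin (n + m)) ℝ,
        p.totalDegree ≤ 2 * m - 1 ∧
        ∀ (b c : ℕ → ℤ), (∀ k, b k = 0 ∨ b k = 1) →
          MPlusBitsInterface n m hm ι b c →
          v + ∑ i ∈ Finset.Icc 1 n,
              w i * ((∏ k ∈ Finset.Icc i n, (2 * c k - 1) : ℤ) : ℝ)
            = MvPolynomial.eval
                (fun t : Fin (n + m) =>
                  ((∏ k ∈ Finset.Icc ((t : ℕ) + 1) (n + m), (2 * b k - 1) : ℤ) : ℝ))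
                p := by
  classical
  intro v w
  set f0 : ℕ → MvPolynomial (Fin (n + m)) ℝ := fun i =>
    Phi n m (sig ι i) *
      ∏ k ∈ Finset.univ.filter (fun k : Fin m => sig ι i < ι k),
        (Phi n m (ι k) * Phi n m (ι k + 1)) with hf0
  refine ⟨MvPolynomial.C v + ∑ i ∈ Finset.Icc 1 n, MvPolynomial.C (w i) * f0 i, ?_, ?_⟩
  · -- degree bound
    apply le_trans (MvPolynomial.totalDegree_add _ _)
    rw [max_le_iff]
    constructor
    · simp
    · apply le_trans (MvPolynomial.totalDegree_finset_sum _ _)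
      apply Finset.sup_le
      intro i hi
      simp only [Finset.mem_Icc] at hi
      have hdeg : (f0 i).totalDegree ≤ 1 + 2 * (m - 1) := by
        rw [hf0]
        apply le_trans (MvPolynomial.totalDegree_mul _ _)
        have h1 := Phi_deg n m (sig ι i)
        have hS : (Finset.univ.filter (fun k : Fin m => sig ι i < ι k)).card ≤ m - 1 := by
          have hsub : Finset.univ.filter (fun k : Fin m => sig ι i < ι k) ⊆
              Finset.univ.erase ⟨0, hm⟩ := by
            intro k hk
            simp only [Finset.mem_filter, Finset.mem_univ, true_and] at hk
            rw [Finset.mem_erase]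
            refine ⟨?_, Finset.mem_univ _⟩
            intro hk0
            rw [hk0, hfirst1] at hk
            have : 1 ≤ sig ι i := by unfold sig; omega
            omega
          have := Finset.card_le_card hsub
          rw [Finset.card_erase_of_mem (Finset.mem_univ _)] at this
          simpa using this
        have h2 : (∏ k ∈ Finset.univ.filter (fun k : Fin m => sig ι i < ι k),
            (Phi n m (ι k) * Phi n m (ι k + 1))).totalDegree ≤ 2 * (m - 1) := by
          apply le_trans (MvPolynomial.totalDegree_finset_prod _ _)
          calc ∑ k ∈ Finset.univ.filter (fun k : Fin m => sig ι i < ι k),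
                (Phi n m (ι k) * Phi n m (ι k + 1)).totalDegree
              ≤ ∑ k ∈ Finset.univ.filter (fun k : Fin m => sig ι i < ι k), 2 := by
                apply Finset.sum_le_sum
                intro k _
                apply le_trans (MvPolynomial.totalDegree_mul _ _)
                have := Phi_deg n m (ι k)
                have := Phi_deg n m (ι k + 1)
                omega
            _ = 2 * (Finset.univ.filter (fun k : Fin m => sig ι i < ι k)).card := by
                rw [Finset.sum_const, smul_eq_mul, mul_comm]
            _ ≤ 2 * (m - 1) := by omega
        omega
      calc (MvPolynomial.C (w i) * f0 i).totalDegree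
          ≤ (MvPolynomial.C (w i)).totalDegree + (f0 i).totalDegree :=
            MvPolynomial.totalDegree_mul _ _
        _ ≤ 0 + (1 + 2 * (m - 1)) := by
            have := MvPolynomial.totalDegree_C (σ := Fin (n + m)) (w i)
            omega
        _ ≤ 2 * m - 1 := by omega
  · -- evaluation identity
    intro b c hb hI
    rw [map_add, MvPolynomial.eval_C, map_sum]
    congr 1
    apply Finset.sum_congr rfl
    intro i hi
    simp only [Finset.mem_Icc] at hi
    rw [MvPolynomial.eval_mul, MvPolynomial.eval_C]
    congr 1
    -- per-term identity
    have hiota_lb : ∀ k : Fin m, 1 ≤ ι k := by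
      intro k
      have : ι ⟨0, hm⟩ ≤ ι k := hmono.monotone (by simp [Fin.le_def])
      omega
    have hiota_ub : ∀ k : Fin m, ι k ≤ n + m := by
      intro k
      have : ι k ≤ ι ⟨m - 1, by omega⟩ := hmono.monotone (by simp [Fin.le_def]; omega)
      omega
    have hsig_lb : 1 ≤ sig ι i := by unfold sig; omega
    have hsig_ub : sig ι i ≤ n + m := by
      have := gcount_le ι i
      unfold sig; omega
    rw [hf0]
    simp only
    rw [MvPolynomial.eval_mul, MvPolynomial.eval_prod]
    rw [Phi_eval n m b (sig ι i) hsig_lb (by omega)]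
    have hterm : ∀ k ∈ Finset.univ.filter (fun k : Fin m => sig ι i < ι k),
        MvPolynomial.eval
          (fun t : Fin (n + m) =>
            ((∏ k ∈ Finset.Icc ((t : ℕ) + 1) (n + m), (2 * b k - 1) : ℤ) : ℝ))
          (Phi n m (ι k) * Phi n m (ι k + 1))
        = ((2 * b (ι k) - 1 : ℤ) : ℝ) := by
      intro k _
      rw [MvPolynomial.eval_mul, Phi_eval n m b (ι k) (hiota_lb k) (by have := hiota_ub k; omega),
        Phi_eval n m b (ι k + 1) (by omega) (by have := hiota_ub k; omega)]
      rw [← Int.cast_mul, ← feat_split b hb (ι k) (n + m) (hiota_ub k)]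
    rw [Finset.prod_congr rfl hterm]
    rw [← Int.cast_prod, ← Int.cast_mul]
    rw [← prod_c_eq ι hm hmono hfirst1 hlast b c hb hI i hi.1 hi.2]
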